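/- Let π be a loopless decorated permutation on [n] (i.e. π has no fixed points designated as loops and no plain fixed points other than coloops; in particular π(i) ≠ i unless i is a coloop, and there are no loops) with exactly k+1 anti-excedances, where an anti-excedance is a position i with π(i) < i or a coloop fixed point. Define π̂ by π̂(i) = π(i−1) (indices mod n), declaring any fixed points of π̂ to be loops. Then π̂ is a coloopless decorated permutation on [n] with exactly k anti-excedances, and the map π ↦ π̂ is a bijection from loopless decorated permutations on [n] with k+1 anti-excedances to coloopless decorated permutations on [n] with k anti-excedances. -/

import Mathlib

/-- A decorated permutation on `[n]`: a permutation of `Fin n` together with a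
colouring of its fixed points; `coloop i = true` means `i` is a white fixed point
(coloop), and a fixed point with `coloop i = false` is a black fixed point (loop).
Non-fixed points are required to be uncoloured (`false`). -/
structure DecoratedPerm (n : ℕ) where
  perm : Equiv.Perm (Fin n)
  coloop : Fin n → Bool
  coloop_fixed : ∀ i, coloop i = true → perm i = i

namespace DecoratedPerm

variable {n : ℕ}

/-- The number of anti-excedances of a decorated permutation: positions `i` with
`π⁻¹(i) > i`, or fixed points coloured as coloops. -/
def antiExcCount (π : DecoratedPerm n) : ℕ :=
  (Finset.univ.filter fun i : Fin n =>
    i < π.perm.symm i ∨ (π.perm i = i ∧ π.coloop i = true)).card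

/-- `π` is loopless: every fixed point is a coloop (no black fixed points). -/
def Loopless (π : DecoratedPerm n) : Prop := ∀ i, π.perm i = i → π.coloop i = true

/-- `π` is coloopless: no white fixed points. -/
def Coloopless (π : DecoratedPerm n) : Prop := ∀ i, π.perm i = i → π.coloop i = false

/-- The T-duality map: `π̂(i) = π(i − 1)` (indices mod `n`), with all fixed points
of `π̂` declared to be loops. -/
def Tdual [NeZero n] (π : DecoratedPerm n) : DecoratedPerm n where
  perm := (Equiv.subRight (1 : Fin n)).trans π.perm
  coloop := fun _ => false
  coloop_fixed := by intro i h; simp at h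

lemma ext' (π σ : DecoratedPerm n) (h1 : π.perm = σ.perm) (h2 : π.coloop = σ.coloop) :
    π = σ := by cases π; cases σ; simp_all

lemma tdual_symm_apply [NeZero n] (π : DecoratedPerm n) (i : Fin n) :
    (Tdual π).perm.symm i = π.perm.symm i + 1 := by
  simp [Tdual, Equiv.subRight, sub_add_cancel]

lemma fin_add_one_val [NeZero n] (j : Fin n) (hj : j.val ≠ n - 1) :
    (j + 1).val = j.val + 1 := by
  have hn : 0 < n := Nat.pos_of_ne_zero (NeZero.ne n)
  have h2 : 2 ≤ n := by have := j.isLt; omega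
  have h1 : (1 : Fin n).val = 1 := Nat.mod_eq_of_lt h2
  rw [Fin.val_add, h1, Nat.mod_eq_of_lt (by have := j.isLt; omega)]

lemma fin_last_add_one [NeZero n] :
    (⟨n - 1, by have := Nat.pos_of_ne_zero (NeZero.ne n); omega⟩ + 1 : Fin n) = 0 := by
  have hn : 0 < n := Nat.pos_of_ne_zero (NeZero.ne n)
  apply Fin.ext
  rw [Fin.val_add, Fin.val_zero]
  rcases Nat.lt_or_ge 1 n with h2 | h2
  · have h1 : (1 : Fin n).val = 1 := Nat.mod_eq_of_lt h2
    rw [h1, Nat.sub_add_cancel hn, Nat.mod_self]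
  · have hn1 : n = 1 := by omega
    subst hn1
    simp [Nat.mod_one]

/-- Key counting lemma: T-duality drops the anti-excedance count by one. -/
lemma count_tdual [NeZero n] (π : DecoratedPerm n) (h : π.Loopless) :
    π.antiExcCount = (Tdual π).antiExcCount + 1 := by
  have hn : 0 < n := Nat.pos_of_ne_zero (NeZero.ne n)
  set m : Fin n := ⟨n - 1, by omega⟩ with hm
  set a : Fin n := π.perm m with ha
  have hsa : π.perm.symm a = m := π.perm.symm_apply_apply m
  -- condition for π is equivalent to `i ≤ π⁻¹ i`
  have hA : ∀ i : Fin n,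
      (i < π.perm.symm i ∨ (π.perm i = i ∧ π.coloop i = true)) ↔ i ≤ π.perm.symm i := by
    intro i
    constructor
    · rintro (hlt | ⟨hfix, -⟩)
      · exact le_of_lt hlt
      · have : π.perm.symm i = i := π.perm.symm_apply_eq.mpr hfix.symm
        exact le_of_eq this.symm
    · intro hle
      rcases eq_or_lt_of_le hle with heq | hlt
      · right
        have hfix : π.perm i = i := by
          conv_lhs => rw [heq]
          exact π.perm.apply_symm_apply i
        exact ⟨hfix, h i hfix⟩
      · exact Or.inl hlt
  have hAB : (Finset.univ.filter fun i : Fin n =>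
      i < π.perm.symm i ∨ (π.perm i = i ∧ π.coloop i = true)) =
      insert a (Finset.univ.filter fun i : Fin n =>
        i < (Tdual π).perm.symm i ∨ ((Tdual π).perm i = i ∧ (Tdual π).coloop i = true)) := by
    ext i
    simp only [Finset.mem_filter, Finset.mem_insert, Finset.mem_univ, true_and,
      tdual_symm_apply, hA]
    have hcl : (Tdual π).coloop i = false := rfl
    rw [hcl]
    simp only [Bool.false_eq_true, and_false, or_false]
    by_cases hia : i = a
    · simp only [hia, true_or, iff_true, hsa]
      rw [Fin.le_def]
      have := a.isLt
      simp only [hm]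
      omega
    · simp only [hia, false_or]
      have hne : (π.perm.symm i).val ≠ n - 1 := by
        intro hc
        exact hia (by rw [ha, ← Fin.ext hc (a := π.perm.symm i) (b := m),
          π.perm.apply_symm_apply])
      rw [Fin.le_def, Fin.lt_def, fin_add_one_val _ hne]
      omega
  have hnotmem : a ∉ (Finset.univ.filter fun i : Fin n =>
      i < (Tdual π).perm.symm i ∨ ((Tdual π).perm i = i ∧ (Tdual π).coloop i = true)) := by
    simp only [Finset.mem_filter, Finset.mem_univ, true_and, tdual_symm_apply, not_or]
    have hcl : (Tdual π).coloop a = false := rfl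
    rw [hcl]
    refine ⟨?_, by simp⟩
    rw [hsa, hm, fin_last_add_one, Fin.lt_def]
    simp
  rw [antiExcCount, antiExcCount, hAB, Finset.card_insert_of_notMem hnotmem]

end DecoratedPerm

/-- **T-duality is a bijection** from loopless decorated permutations on `[n]` with
`k+1` anti-excedances to coloopless decorated permutations on `[n]` with `k`
anti-excedances. -/
theorem tduality_bijection (n k : ℕ) [NeZero n] :
    Set.BijOn (DecoratedPerm.Tdual : DecoratedPerm n → DecoratedPerm n)
      {π : DecoratedPerm n | π.Loopless ∧ π.antiExcCount = k + 1}
      {π : DecoratedPerm n | π.Coloopless ∧ π.antiExcCount = k} := by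
  constructor
  · -- MapsTo
    rintro π ⟨hl, hc⟩
    refine ⟨fun i _ => rfl, ?_⟩
    have := DecoratedPerm.count_tdual π hl
    omega
  constructor
  · -- InjOn
    rintro π₁ ⟨hl₁, -⟩ π₂ ⟨hl₂, -⟩ heq
    have hperm : π₁.perm = π₂.perm := by
      have h1 : (DecoratedPerm.Tdual π₁).perm = (DecoratedPerm.Tdual π₂).perm := by
        rw [heq]
      have := congrArg (fun e => (Equiv.subRight (1 : Fin n)).symm.trans e) h1
      simpa [DecoratedPerm.Tdual, ← Equiv.trans_assoc] using this
    refine DecoratedPerm.ext' π₁ π₂ hperm ?_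
    funext i
    by_cases hfix : π₁.perm i = i
    · rw [hl₁ i hfix, hl₂ i (hperm ▸ hfix)]
    · have h1 : π₁.coloop i = false := by
        cases hc : π₁.coloop i
        · rfl
        · exact absurd (π₁.coloop_fixed i hc) hfix
      have h2 : π₂.coloop i = false := by
        cases hc : π₂.coloop i
        · rfl
        · exact absurd (π₂.coloop_fixed i hc) (hperm ▸ hfix)
      rw [h1, h2]
  · -- SurjOn
    rintro σ ⟨hcl, hc⟩
    refine ⟨⟨(Equiv.subRight (1 : Fin n)).symm.trans σ.perm,
        fun i => decide ((Equiv.subRight (1 : Fin n)).symm.trans σ.perm i = i),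
        fun i hd => of_decide_eq_true hd⟩, ?_, ?_⟩
    · constructor
      · exact fun i hfix => decide_eq_true hfix
      · have hT : DecoratedPerm.Tdual
            (⟨(Equiv.subRight (1 : Fin n)).symm.trans σ.perm,
              fun i => decide ((Equiv.subRight (1 : Fin n)).symm.trans σ.perm i = i),
              fun i hd => of_decide_eq_true hd⟩ : DecoratedPerm n) = σ := by
          refine DecoratedPerm.ext' _ _ ?_ ?_
          · show (Equiv.subRight (1 : Fin n)).trans
              ((Equiv.subRight (1 : Fin n)).symm.trans σ.perm) = σ.perm
            rw [← Equiv.trans_assoc, Equiv.self_trans_symm, Equiv.refl_trans]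
          · funext i
            show false = σ.coloop i
            cases hc2 : σ.coloop i
            · rfl
            · exact absurd (hcl i (σ.coloop_fixed i hc2)) (by rw [hc2]; simp)
        have hloop : (⟨(Equiv.subRight (1 : Fin n)).symm.trans σ.perm,
              fun i => decide ((Equiv.subRight (1 : Fin n)).symm.trans σ.perm i = i),
              fun i hd => of_decide_eq_true hd⟩ : DecoratedPerm n).Loopless :=
          fun i hfix => decide_eq_true hfix
        have := DecoratedPerm.count_tdual _ hloop
        rw [hT, hc] at this
        exact this
    · refine DecoratedPerm.ext' _ _ ?_ ?_
      · show (Equiv.subRight (1 : Fin n)).trans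
          ((Equiv.subRight (1 : Fin n)).symm.trans σ.perm) = σ.perm
        rw [← Equiv.trans_assoc, Equiv.self_trans_symm, Equiv.refl_trans]
      · funext i
        show false = σ.coloop i
        cases hc2 : σ.coloop i
        · rfl
        · exact absurd (hcl i (σ.coloop_fixed i hc2)) (by rw [hc2]; simp)
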